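/- Let D ≥ 1 and let l : ℝ^D → ℝ be differentiable everywhere, bounded below with infimum inf l, and have an L-Lipschitz gradient: ‖∇l(a) − ∇l(b)‖₂ ≤ L‖a − b‖₂ for all a, b ∈ ℝ^D. Fix γ > 0, a deterministic starting point δ⁰ ∈ ℝ^D, step sizes ε₀, …, ε_{T−1} ≥ 0, and let z₀, …, z_{T−1} be independent random vectors in ℝ^D, each with independent standard normal coordinates. Define the random iterates δ^{t+1} = δ^t − ε_t·sign(∇l(δ^t) + γ z_t) (sign applied componentwise). Then Σ_{t=0}^{T−1} ε_t · E[ Σ_{i=1}^{D} |∂_i l(δ^t)|·(2Φ(|∂_i l(δ^t)|/γ) − 1) ] ≤ l(δ⁰) − inf l + (L·D/2)·Σ_{t=0}^{T−1} ε_t². -/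

import Mathlib

open MeasureTheory ProbabilityTheory

/-- The cumulative distribution function of the standard normal distribution. -/
noncomputable def Phi (x : ℝ) : ℝ := ((gaussianReal 0 1) (Set.Iic x)).toReal

/-- The law of `T` independent random vectors in `ℝ^D`, each with i.i.d. standard
normal coordinates. -/
noncomputable def prodGaussian (T D : ℕ) : Measure (Fin T → Fin D → ℝ) :=
  Measure.pi fun _ => Measure.pi fun _ => gaussianReal 0 1

section PRELIM
open Set RealInnerProductSpace
set_option linter.unusedSectionVars false
set_option linter.unusedVariables false

section aux
variable {ι X : Type*} [Fintype ι] [DecidableEq ι] [MeasurableSpace X]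
  (μ : Measure X) [IsProbabilityMeasure μ]

lemma meas_update (i : ι) : Measurable (fun p : (ι → X) × X => Function.update p.1 i p.2) := by
  apply measurable_pi_lambda
  intro j
  rcases eq_or_ne j i with h | h
  · subst h; simpa [Function.update_apply] using measurable_snd
  · have hm : Measurable fun c : (ι → X) × X => c.1 j := (measurable_pi_apply j).comp measurable_fst
    simpa [Function.update_apply, h] using hm

lemma measurePreserving_update (i : ι) :
    MeasurePreserving (fun p : (ι → X) × X => Function.update p.1 i p.2)
      ((Measure.pi fun _ => μ).prod μ) (Measure.pi fun _ => μ) := by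
  refine ⟨meas_update i, ?_⟩
  refine (Measure.pi_eq fun s hs => ?_).symm
  rw [Measure.map_apply (meas_update i) (MeasurableSet.univ_pi hs)]
  have hset : (fun p : (ι → X) × X => Function.update p.1 i p.2) ⁻¹' Set.pi Set.univ s
      = (Set.pi Set.univ (Function.update s i Set.univ)) ×ˢ (s i) := by
    ext ⟨ω, x⟩
    simp only [Set.mem_preimage, Set.mem_pi, Set.mem_univ, forall_true_left, Set.mem_prod]
    constructor
    · intro h
      refine ⟨fun j => ?_, by simpa using h i⟩
      rcases eq_or_ne j i with rfl | hj
      · simp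
      · simpa [Function.update_apply, hj] using h j
    · rintro ⟨h1, h2⟩ j
      rcases eq_or_ne j i with rfl | hj
      · simpa using h2
      · have := h1 j
        simpa [Function.update_apply, hj] using this
  rw [hset, Measure.prod_prod, Measure.pi_pi]
  have : ∀ j, μ (Function.update s i Set.univ j) =
      Function.update (fun j => μ (s j)) i 1 j := by
    intro j
    rw [Function.apply_update (fun _ t => μ t) s i Set.univ j, measure_univ]
  simp_rw [this]
  rw [Finset.prod_update_of_mem (Finset.mem_univ i), one_mul, mul_comm,
    Finset.sdiff_singleton_eq_erase]
  exact Finset.mul_prod_erase Finset.univ (fun x => μ (s x)) (Finset.mem_univ i)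

lemma pi_map_eval (i : ι) :
    (Measure.pi fun _ : ι => μ).map (fun ω => ω i) = μ := by
  ext s hs
  rw [Measure.map_apply (measurable_pi_apply i) hs]
  have : (fun ω : ι → X => ω i) ⁻¹' s = Set.pi Set.univ (Function.update (fun _ => Set.univ) i s) := by
    ext ω
    simp only [Set.mem_preimage, Set.mem_pi, Set.mem_univ, forall_true_left]
    constructor
    · intro h j
      rcases eq_or_ne j i with rfl | hj
      · simpa using h
      · simp [Function.update_apply, hj]
    · intro h
      simpa using h i
  rw [this, Measure.pi_pi]
  rw [Finset.prod_eq_single i (fun j _ hj => by simp [Function.update_apply, hj]) (by simp)]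
  simp

lemma integral_update (i : ι) (f : (ι → X) → ℝ) (hf : Measurable f) (C : ℝ)
    (hC : ∀ ω, |f ω| ≤ C) :
    ∫ ω, f ω ∂(Measure.pi fun _ => μ) =
      ∫ ω, ∫ x, f (Function.update ω i x) ∂μ ∂(Measure.pi fun _ => μ) := by
  have h1 : ∫ ω, f ω ∂(Measure.pi fun _ => μ)
      = ∫ p, f (Function.update p.1 i p.2) ∂((Measure.pi fun _ => μ).prod μ) := by
    rw [← (measurePreserving_update μ i).map_eq,
      integral_map (meas_update i).aemeasurable]
    rw [(measurePreserving_update μ i).map_eq]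
    exact hf.aestronglyMeasurable
  rw [h1]
  rw [integral_prod]
  exact (Integrable.mono' (integrable_const C)
    ((hf.comp (meas_update i)).aestronglyMeasurable)
    (Filter.Eventually.of_forall fun p => by simpa using hC _))

end aux
lemma Phi_nonneg (x : ℝ) : 0 ≤ Phi x := ENNReal.toReal_nonneg

lemma Phi_le_one (x : ℝ) : Phi x ≤ 1 := by
  have := prob_le_one (μ := gaussianReal 0 1) (s := Set.Iic x)
  simpa [Phi] using ENNReal.toReal_le_of_le_ofReal zero_le_one (by simpa using this)

lemma Phi_mono : Monotone Phi := fun a b hab =>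
  ENNReal.toReal_mono (measure_ne_top _ _) (measure_mono (Set.Iic_subset_Iic.2 hab))

lemma measurable_Phi : Measurable Phi := Phi_mono.measurable

lemma gauss_singleton (x : ℝ) : gaussianReal 0 1 {x} = 0 :=
  gaussianReal_absolutelyContinuous 0 one_ne_zero (by simp)

lemma meas_union_null' {α} [MeasurableSpace α] {μ : Measure α} {s t : Set α}
    (ht : μ t = 0) : μ (s ∪ t) = μ s :=
  le_antisymm (by simpa [ht] using measure_union_le (μ := μ) s t)
    (measure_mono Set.subset_union_left)

lemma gauss_Iio (x : ℝ) : (gaussianReal 0 1) (Set.Iio x) = (gaussianReal 0 1) (Set.Iic x) := by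
  rw [← Set.Iio_union_right, meas_union_null' (gauss_singleton x)]

lemma gauss_Ioi (x : ℝ) : ((gaussianReal 0 1) (Set.Ioi x)).toReal = 1 - Phi x := by
  have h : Set.Ioi x = (Set.Iic x)ᶜ := by simp
  rw [h, prob_compl_eq_one_sub measurableSet_Iic]
  rw [ENNReal.toReal_sub_of_le prob_le_one ENNReal.one_ne_top]
  simp [Phi]

lemma Phi_neg (x : ℝ) : Phi (-x) = 1 - Phi x := by
  have hmap : (gaussianReal 0 1).map (fun y => -1 * y) = gaussianReal 0 1 := by
    rw [show (fun y : ℝ => -1 * y) = ((-1 : ℝ) * ·) from rfl, gaussianReal_map_const_mul]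
    norm_num
  have hpre : (fun y : ℝ => -1 * y) ⁻¹' Set.Iic (-x) = Set.Ici x := by
    ext y; simp [neg_le]
  have : (gaussianReal 0 1) (Set.Iic (-x)) = (gaussianReal 0 1) (Set.Ici x) := by
    conv_lhs => rw [← hmap]
    rw [Measure.map_apply (measurable_id'.const_mul (-1)) measurableSet_Iic, hpre]
  have hIci : (gaussianReal 0 1) (Set.Ici x) = (gaussianReal 0 1) (Set.Ioi x) := by
    rw [← Set.Ioi_union_left, meas_union_null' (gauss_singleton x)]
  rw [Phi, this, hIci, gauss_Ioi]

lemma integral_sign_gauss (a γ : ℝ) (hγ : 0 < γ) :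
    ∫ z, Real.sign (a + γ * z) ∂(gaussianReal 0 1) = 2 * Phi (a / γ) - 1 := by
  set c := -a / γ with hc
  have hfun : (fun z => Real.sign (a + γ * z)) =
      fun z => (Set.Ioi c).indicator (fun _ => (1:ℝ)) z
        - (Set.Iio c).indicator (fun _ => (1:ℝ)) z := by
    funext z
    have hg : γ * (-a / γ) = -a := by rw [mul_comm]; exact div_mul_cancel₀ (-a) (ne_of_gt hγ)
    rcases lt_trichotomy z c with h | h | h
    · have hz : a + γ * z < 0 := by
        have := mul_lt_mul_of_pos_left h hγ
        rw [hc, hg] at this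
        linarith
      simp [h, not_lt.2 h.le, Real.sign_of_neg hz, lt_irrefl]
    · have hz0 : a + γ * c = 0 := by rw [hc]; linarith [hg]
      have hz : a + γ * z = 0 := by rw [h]; exact hz0
      simp [hz, hz0, Real.sign_zero, h, lt_irrefl]
    · have hz : 0 < a + γ * z := by
        have := mul_lt_mul_of_pos_left h hγ
        rw [hc, hg] at this
        linarith
      simp [h, not_lt.2 h.le, Real.sign_of_pos hz]
  rw [hfun, integral_sub ((integrable_const (1:ℝ)).indicator measurableSet_Ioi)
    ((integrable_const (1:ℝ)).indicator measurableSet_Iio),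
    integral_indicator_const _ measurableSet_Ioi,
    integral_indicator_const _ measurableSet_Iio]
  simp only [smul_eq_mul, mul_one]
  simp only [measureReal_def]
  rw [gauss_Ioi, gauss_Iio]
  have hphi : ((gaussianReal 0 1) (Set.Iic c)).toReal = Phi c := rfl
  rw [hphi, hc, neg_div, Phi_neg]
  ring

lemma sign_abs_identity (a γ : ℝ) (hγ : 0 < γ) :
    a * (2 * Phi (a / γ) - 1) = |a| * (2 * Phi (|a| / γ) - 1) := by
  rcases le_or_gt 0 a with h | h
  · rw [abs_of_nonneg h]
  · rw [abs_of_neg h, neg_div, Phi_neg]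
    ring
lemma descent {D : ℕ} (l : EuclideanSpace ℝ (Fin D) → ℝ) (hl : Differentiable ℝ l)
    (L : ℝ) (hL : ∀ a b, ‖gradient l a - gradient l b‖ ≤ L * ‖a - b‖)
    (x v : EuclideanSpace ℝ (Fin D)) :
    l (x + v) ≤ l x + ⟪gradient l x, v⟫ + L / 2 * ‖v‖ ^ 2 := by
  set c : ℝ := ⟪gradient l x, v⟫ with hc
  set K : ℝ := L * ‖v‖ ^ 2 with hK
  have hfd : ∀ y, HasFDerivAt l ((InnerProductSpace.toDual ℝ _) (gradient l y)) y :=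
    fun y => hasGradientAt_iff_hasFDerivAt.mp (hl y).hasGradientAt
  set ψ : ℝ → ℝ := fun s => l (x + s • v) - s * c - K / 2 * s ^ 2 with hψ
  have hderiv : ∀ s : ℝ, HasDerivAt ψ (⟪gradient l (x + s • v), v⟫ - c - K * s) s := by
    intro s
    have hline : HasDerivAt (fun s : ℝ => x + s • v) v s := by
      simpa using ((hasDerivAt_id s).smul_const v).const_add x
    have h1 : HasDerivAt (fun s : ℝ => l (x + s • v))
        ((InnerProductSpace.toDual ℝ _) (gradient l (x + s • v)) v) s :=
      (hfd (x + s • v)).comp_hasDerivAt s hline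
    rw [InnerProductSpace.toDual_apply_apply] at h1
    have h2 : HasDerivAt (fun s : ℝ => s * c) c s := by
      simpa using (hasDerivAt_id s).mul_const c
    have h3 : HasDerivAt (fun s : ℝ => K / 2 * s ^ 2) (K * s) s := by
      have h := (hasDerivAt_pow 2 s).const_mul (K / 2)
      refine h.congr_deriv ?_
      push_cast
      ring
    exact (h1.sub h2).sub h3
  have hcont : Continuous ψ := by
    have : Differentiable ℝ ψ := fun s => (hderiv s).differentiableAt
    exact this.continuous
  have hanti : AntitoneOn ψ (Set.Icc 0 1) := by
    apply antitoneOn_of_deriv_nonpos (convex_Icc 0 1) hcont.continuousOn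
    · intro s hs
      exact ((hderiv s).differentiableAt).differentiableWithinAt
    · intro s hs
      rw [interior_Icc] at hs
      rw [(hderiv s).deriv]
      have h1 : ⟪gradient l (x + s • v), v⟫ - c = ⟪gradient l (x + s • v) - gradient l x, v⟫ := by
        rw [inner_sub_left]
      have h2 : ⟪gradient l (x + s • v) - gradient l x, v⟫ ≤
          ‖gradient l (x + s • v) - gradient l x‖ * ‖v‖ := real_inner_le_norm _ _
      have h3 : ‖gradient l (x + s • v) - gradient l x‖ ≤ L * (s * ‖v‖) := by
        have := hL (x + s • v) x
        simpa [norm_smul, abs_of_pos hs.1] using this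
      have hvn : (0:ℝ) ≤ ‖v‖ := norm_nonneg _
      nlinarith [hs.1.le]
  have hmem0 : (0:ℝ) ∈ Set.Icc (0:ℝ) 1 := by norm_num
  have hmem1 : (1:ℝ) ∈ Set.Icc (0:ℝ) 1 := by norm_num
  have := hanti hmem0 hmem1 zero_le_one
  simp only [hψ] at this
  have h0 : x + (0:ℝ) • v = x := by simp
  have h1 : x + (1:ℝ) • v = x + v := by simp
  rw [h0, h1] at this
  simp only [zero_mul, one_mul, one_pow, mul_one] at this
  nlinarith [this]

lemma measurable_realSign : Measurable Real.sign := by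
  have h : Real.sign = fun r : ℝ => if r < 0 then (-1:ℝ) else if 0 < r then 1 else 0 :=
    funext fun r => rfl
  rw [h]
  exact Measurable.ite (measurableSet_lt measurable_id measurable_const) measurable_const
    (Measurable.ite (measurableSet_lt measurable_const measurable_id)
      measurable_const measurable_const)

lemma abs_realSign_le (r : ℝ) : |Real.sign r| ≤ 1 := by
  rcases Real.sign_apply_eq r with h | h | h <;> rw [h] <;> norm_num

lemma coord_le_norm {D : ℕ} (x : EuclideanSpace ℝ (Fin D)) (i : Fin D) : |x i| ≤ ‖x‖ := by
  rw [EuclideanSpace.norm_eq, ← Real.sqrt_sq_eq_abs]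
  apply Real.sqrt_le_sqrt
  have := Finset.single_le_sum (f := fun j => ‖x j‖ ^ 2)
    (fun j _ => sq_nonneg _) (Finset.mem_univ i)
  simpa [Real.norm_eq_abs, sq_abs] using this

lemma sign_vec_norm_le {D : ℕ} (f : Fin D → ℝ) (hf : ∀ i, |f i| ≤ 1) :
    ‖(WithLp.equiv 2 (Fin D → ℝ)).symm f‖ ≤ Real.sqrt D := by
  rw [EuclideanSpace.norm_eq]
  apply Real.sqrt_le_sqrt
  calc ∑ i, ‖(WithLp.equiv 2 (Fin D → ℝ)).symm f i‖ ^ 2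
      ≤ ∑ _i : Fin D, (1:ℝ) := by
        apply Finset.sum_le_sum
        intro i _
        have : ‖(WithLp.equiv 2 (Fin D → ℝ)).symm f i‖ = |f i| := rfl
        rw [this, sq_abs]
        nlinarith [hf i, abs_nonneg (f i), sq_abs (f i)]
    _ = (D : ℝ) := by simp

end PRELIM

set_option maxHeartbeats 2000000 in
open RealInnerProductSpace in
/-- telescoped bound: for `l` differentiable, bounded below, with
`L`-Lipschitz gradient, and iterates `δ^{t+1} = δ^t − ε_t·sign(∇l(δ^t) + γ z_t)` driven by
independent Gaussian perturbations `z_0, …, z_{T−1}`,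
`Σ_t ε_t E[Σᵢ |∂ᵢl(δ^t)| (2Φ(|∂ᵢl(δ^t)|/γ) − 1)] ≤ l(δ⁰) − inf l + (L D / 2) Σ_t ε_t²`. -/
theorem stmt8 (D T : ℕ) (hD : 1 ≤ D)
    (l : EuclideanSpace ℝ (Fin D) → ℝ) (hl : Differentiable ℝ l)
    (hbdd : BddBelow (Set.range l))
    (L : ℝ) (hL : ∀ a b, ‖gradient l a - gradient l b‖ ≤ L * ‖a - b‖)
    (γ : ℝ) (hγ : 0 < γ)
    (δ0 : EuclideanSpace ℝ (Fin D))
    (ε : Fin T → ℝ) (hε : ∀ t, 0 ≤ ε t)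
    (δseq : ℕ → (Fin T → Fin D → ℝ) → EuclideanSpace ℝ (Fin D))
    (hδ0 : ∀ ω, δseq 0 ω = δ0)
    (hrec : ∀ (t : Fin T) (ω : Fin T → Fin D → ℝ),
      δseq ((t : ℕ) + 1) ω = δseq (t : ℕ) ω -
        ε t • (WithLp.equiv 2 (Fin D → ℝ)).symm
          (fun i => Real.sign (gradient l (δseq (t : ℕ) ω) i + γ * ω t i))) :
    ∑ t : Fin T, ε t *
        (∫ ω, (∑ i, |gradient l (δseq (t : ℕ) ω) i| *
            (2 * Phi (|gradient l (δseq (t : ℕ) ω) i| / γ) - 1))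
          ∂(prodGaussian T D)) ≤
      l δ0 - sInf (Set.range l) + L * D / 2 * ∑ t : Fin T, (ε t) ^ 2 := by
  classical
  set ν := prodGaussian T D with hν
  have hνpi : ν = Measure.pi fun _ : Fin T => Measure.pi fun _ : Fin D => gaussianReal 0 1 := rfl
  haveI : IsProbabilityMeasure ν := by rw [hνpi]; infer_instance
  -- L is nonnegative
  have hL0 : 0 ≤ L := by
    have hne : (EuclideanSpace.single (⟨0, hD⟩ : Fin D) (1:ℝ)) ≠ 0 := by
      intro h
      have := congrFun (congrArg (fun v : EuclideanSpace ℝ (Fin D) => (v : Fin D → ℝ)) h) ⟨0, hD⟩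
      simp [EuclideanSpace.single_apply] at this
    have h1 := hL (EuclideanSpace.single (⟨0, hD⟩ : Fin D) (1:ℝ)) 0
    have h2 : (0:ℝ) < ‖(EuclideanSpace.single (⟨0, hD⟩ : Fin D) (1:ℝ)) - 0‖ := by
      rw [sub_zero]; exact norm_pos_iff.mpr hne
    nlinarith [norm_nonneg (gradient l (EuclideanSpace.single (⟨0, hD⟩ : Fin D) (1:ℝ)) - gradient l 0)]
  -- gradient is continuous
  have hgcont : Continuous (gradient l) := by
    have : LipschitzWith (Real.toNNReal L) (gradient l) := by
      apply LipschitzWith.of_dist_le_mul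
      intro a b
      rw [dist_eq_norm, dist_eq_norm, Real.coe_toNNReal L hL0]
      exact hL a b
    exact this.continuous
  -- measurability of the iterates
  have hmeas : ∀ s : ℕ, s ≤ T → Measurable (δseq s) := by
    intro s
    induction s with
    | zero =>
      intro _
      have : δseq 0 = fun _ => δ0 := funext hδ0
      rw [this]
      exact measurable_const
    | succ n ih =>
      intro hn
      have hn' : n < T := hn
      have hmn := ih (le_of_lt hn')
      have heq : δseq (n+1) = fun ω => δseq n ω -
          ε ⟨n, hn'⟩ • (WithLp.equiv 2 (Fin D → ℝ)).symm
            (fun i => Real.sign (gradient l (δseq n ω) i + γ * ω ⟨n, hn'⟩ i)) :=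
        funext fun ω => hrec ⟨n, hn'⟩ ω
      rw [heq]
      apply Measurable.sub hmn
      refine Measurable.const_smul (M := ℝ) (g := fun ω => (WithLp.equiv 2 (Fin D → ℝ)).symm
          (fun i => Real.sign (gradient l (δseq n ω) i + γ * ω ⟨n, hn'⟩ i))) ?_ _
      have : Measurable (fun ω : Fin T → Fin D → ℝ =>
          (fun i => Real.sign (gradient l (δseq n ω) i + γ * ω ⟨n, hn'⟩ i) : Fin D → ℝ)) := by
        apply measurable_pi_lambda
        intro i
        apply measurable_realSign.comp
        apply Measurable.add
        · exact (by fun_prop : Measurable fun x : EuclideanSpace ℝ (Fin D) => x i).comp (hgcont.measurable.comp hmn)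
        · exact measurable_const.mul
            ((measurable_pi_apply i).comp (measurable_pi_apply (⟨n, hn'⟩ : Fin T)))
      exact (WithLp.measurable_toLp 2 (Fin D → ℝ)).comp this
  -- boundedness of the iterates
  have hbound : ∀ s : ℕ, s ≤ T → ∃ C : ℝ, ∀ ω, ‖δseq s ω‖ ≤ C := by
    intro s
    induction s with
    | zero =>
      intro _
      exact ⟨‖δ0‖, fun ω => by rw [hδ0]⟩
    | succ n ih =>
      intro hn
      have hn' : n < T := hn
      obtain ⟨C, hC⟩ := ih (le_of_lt hn')
      refine ⟨C + |ε ⟨n, hn'⟩| * Real.sqrt D, fun ω => ?_⟩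
      rw [hrec ⟨n, hn'⟩ ω]
      calc ‖δseq n ω - ε ⟨n, hn'⟩ • (WithLp.equiv 2 (Fin D → ℝ)).symm
            (fun i => Real.sign (gradient l (δseq n ω) i + γ * ω ⟨n, hn'⟩ i))‖
          ≤ ‖δseq n ω‖ + ‖ε ⟨n, hn'⟩ • (WithLp.equiv 2 (Fin D → ℝ)).symm
            (fun i => Real.sign (gradient l (δseq n ω) i + γ * ω ⟨n, hn'⟩ i))‖ :=
            norm_sub_le _ _
        _ ≤ C + |ε ⟨n, hn'⟩| * Real.sqrt D := by
            apply add_le_add (hC ω)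
            rw [norm_smul, Real.norm_eq_abs]
            apply mul_le_mul_of_nonneg_left _ (abs_nonneg _)
            exact sign_vec_norm_le _ (fun i => abs_realSign_le _)
  -- the iterate at time s does not depend on coordinates ≥ s
  have hindep : ∀ s : ℕ, ∀ t' : Fin T, s ≤ (t' : ℕ) →
      ∀ ω x, δseq s (Function.update ω t' x) = δseq s ω := by
    intro s
    induction s with
    | zero =>
      intro t' _ ω x
      rw [hδ0, hδ0]
    | succ n ih =>
      intro t' hst ω x
      have hn' : n < T := lt_trans (Nat.lt_of_succ_le hst) t'.isLt
      have hne : t' ≠ (⟨n, hn'⟩ : Fin T) := by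
        intro h
        rw [h] at hst
        exact absurd hst (by simp)
      rw [hrec ⟨n, hn'⟩ (Function.update ω t' x), hrec ⟨n, hn'⟩ ω,
        ih t' (Nat.le_of_succ_le hst) ω x, Function.update_of_ne (Ne.symm hne)]
  -- integrability helper
  have hint : ∀ (f : (Fin T → Fin D → ℝ) → ℝ) (C : ℝ), Measurable f → (∀ ω, |f ω| ≤ C) →
      Integrable f ν := by
    intro f C hf hC
    exact (integrable_const C).mono' hf.aestronglyMeasurable
      (Filter.Eventually.of_forall (by simpa using hC))
  -- gradient coordinate bounds
  have hgb : ∀ s : ℕ, s ≤ T → ∃ B : ℝ, 0 ≤ B ∧ ∀ ω i, |gradient l (δseq s ω) i| ≤ B := by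
    intro s hs
    obtain ⟨C, hC⟩ := hbound s hs
    refine ⟨‖gradient l 0‖ + |L| * |C|, by positivity, ?_⟩
    intro ω i
    calc |gradient l (δseq s ω) i| ≤ ‖gradient l (δseq s ω)‖ := coord_le_norm _ _
      _ ≤ ‖gradient l (δseq s ω) - gradient l 0‖ + ‖gradient l 0‖ := by
          simpa using norm_sub_le_norm_sub_add_norm_sub (gradient l (δseq s ω)) (gradient l 0) 0
      _ ≤ ‖gradient l 0‖ + |L| * |C| := by
          have h1 := hL (δseq s ω) 0
          have h2 : ‖δseq s ω - 0‖ ≤ |C| := by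
            simpa using (hC ω).trans (le_abs_self C)
          have h4 : (0:ℝ) ≤ ‖δseq s ω - 0‖ := norm_nonneg _
          have h3 : L * ‖δseq s ω - 0‖ ≤ |L| * |C| := by
            nlinarith [le_abs_self L, abs_nonneg L, abs_nonneg C]
          linarith
  -- key expectation identity
  have hkey : ∀ t : Fin T,
      ∫ ω, (∑ i, gradient l (δseq (t:ℕ) ω) i *
          Real.sign (gradient l (δseq (t:ℕ) ω) i + γ * ω t i)) ∂ν
      = ∫ ω, (∑ i, |gradient l (δseq (t:ℕ) ω) i| *
          (2 * Phi (|gradient l (δseq (t:ℕ) ω) i| / γ) - 1)) ∂ν := by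
    intro t
    obtain ⟨B, hB0, hB⟩ := hgb (t:ℕ) (le_of_lt t.isLt)
    have hcmeas : Measurable (fun ω => gradient l (δseq (t:ℕ) ω)) :=
      hgcont.measurable.comp (hmeas (t:ℕ) (le_of_lt t.isLt))
    set piG : Measure (Fin D → ℝ) := Measure.pi fun _ : Fin D => gaussianReal 0 1 with hpiG
    haveI : IsProbabilityMeasure piG := by rw [hpiG]; infer_instance
    set f : (Fin T → Fin D → ℝ) → ℝ := fun ω => ∑ i, gradient l (δseq (t:ℕ) ω) i *
        Real.sign (gradient l (δseq (t:ℕ) ω) i + γ * ω t i) with hfdef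
    have hfmeas : Measurable f := by
      apply Finset.measurable_sum
      intro i _
      apply Measurable.mul
      · exact (by fun_prop : Measurable fun x : EuclideanSpace ℝ (Fin D) => x i).comp hcmeas
      · exact measurable_realSign.comp (((by fun_prop : Measurable fun x : EuclideanSpace ℝ (Fin D) => x i).comp hcmeas).add
          (measurable_const.mul ((measurable_pi_apply i).comp (measurable_pi_apply t))))
    have hfb : ∀ ω, |f ω| ≤ D * B := by
      intro ω
      calc |f ω| ≤ ∑ i, |gradient l (δseq (t:ℕ) ω) i *
            Real.sign (gradient l (δseq (t:ℕ) ω) i + γ * ω t i)| :=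
          Finset.abs_sum_le_sum_abs _ _
        _ ≤ ∑ _i : Fin D, B := by
            apply Finset.sum_le_sum
            intro i _
            rw [abs_mul]
            calc |gradient l (δseq (t:ℕ) ω) i| * |Real.sign _| ≤ B * 1 :=
                mul_le_mul (hB ω i) (abs_realSign_le _) (abs_nonneg _) hB0
              _ = B := mul_one B
        _ = D * B := by simp [mul_comm]
    have h1 := integral_update (ι := Fin T) (X := Fin D → ℝ) piG t f hfmeas (D*B) hfb
    have hinner : ∀ ω, (∫ x, f (Function.update ω t x) ∂piG)
        = ∑ i, |gradient l (δseq (t:ℕ) ω) i| *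
            (2 * Phi (|gradient l (δseq (t:ℕ) ω) i| / γ) - 1) := by
      intro ω
      have hcup : ∀ x, gradient l (δseq (t:ℕ) (Function.update ω t x))
          = gradient l (δseq (t:ℕ) ω) := by
        intro x
        rw [hindep (t:ℕ) t le_rfl ω x]
      have hup : ∀ x : Fin D → ℝ, f (Function.update ω t x)
          = ∑ i, gradient l (δseq (t:ℕ) ω) i *
              Real.sign (gradient l (δseq (t:ℕ) ω) i + γ * x i) := by
        intro x
        simp only [hfdef]
        apply Finset.sum_congr rfl
        intro i _
        rw [hcup x, Function.update_self]
      simp_rw [hup]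
      rw [integral_finset_sum]
      · apply Finset.sum_congr rfl
        intro i _
        rw [MeasureTheory.integral_const_mul]
        have hmapeq : (∫ x : Fin D → ℝ, Real.sign (gradient l (δseq (t:ℕ) ω) i + γ * x i) ∂piG)
            = ∫ y, Real.sign (gradient l (δseq (t:ℕ) ω) i + γ * y) ∂(gaussianReal 0 1) := by
          conv_rhs => rw [← pi_map_eval (gaussianReal 0 1) i]
          rw [integral_map (measurable_pi_apply i).aemeasurable
            (measurable_realSign.comp (measurable_const.add
              (measurable_id.const_mul γ))).aestronglyMeasurable]
        rw [hmapeq, integral_sign_gauss _ γ hγ, sign_abs_identity _ γ hγ]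
      · intro i _
        apply (integrable_const (B * 1)).mono'
        · exact ((measurable_const.mul (measurable_realSign.comp (measurable_const.add
            (measurable_const.mul (measurable_pi_apply i))))).aestronglyMeasurable)
        · apply Filter.Eventually.of_forall
          intro x
          rw [Real.norm_eq_abs, abs_mul]
          exact mul_le_mul (hB ω i) (abs_realSign_le _) (abs_nonneg _) hB0
    calc (∫ ω, (∑ i, gradient l (δseq (t:ℕ) ω) i *
          Real.sign (gradient l (δseq (t:ℕ) ω) i + γ * ω t i)) ∂ν)
        = ∫ ω, ∫ x, f (Function.update ω t x) ∂piG ∂ν := h1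
      _ = ∫ ω, (∑ i, |gradient l (δseq (t:ℕ) ω) i| *
            (2 * Phi (|gradient l (δseq (t:ℕ) ω) i| / γ) - 1)) ∂ν :=
          integral_congr_ae (Filter.Eventually.of_forall fun ω => hinner ω)
  -- integrability of l along iterates
  have hlint : ∀ s : ℕ, s ≤ T → Integrable (fun ω => l (δseq s ω)) ν := by
    intro s hs
    obtain ⟨C, hC⟩ := hbound s hs
    obtain ⟨M, hM⟩ := (isCompact_closedBall (0:EuclideanSpace ℝ (Fin D)) C).exists_bound_of_continuousOn
      (hl.continuous.continuousOn)
    apply hint _ M (hl.continuous.measurable.comp (hmeas s hs))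
    intro ω
    have := hM (δseq s ω) (by simpa [Metric.mem_closedBall, dist_eq_norm] using hC ω)
    simpa [Real.norm_eq_abs] using this
  -- the per-step inequality, integrated
  have hstep : ∀ t : Fin T,
      ε t * (∫ ω, (∑ i, |gradient l (δseq (t:ℕ) ω) i| *
          (2 * Phi (|gradient l (δseq (t:ℕ) ω) i| / γ) - 1)) ∂ν)
      ≤ (∫ ω, l (δseq (t:ℕ) ω) ∂ν) - (∫ ω, l (δseq ((t:ℕ)+1) ω) ∂ν) + L * D / 2 * ε t ^ 2 := by
    intro t
    have htT : (t:ℕ) ≤ T := le_of_lt t.isLt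
    have htT1 : (t:ℕ)+1 ≤ T := t.isLt
    obtain ⟨B, hB0, hB⟩ := hgb (t:ℕ) htT
    have hcmeas : Measurable (fun ω => gradient l (δseq (t:ℕ) ω)) :=
      hgcont.measurable.comp (hmeas (t:ℕ) htT)
    set f : (Fin T → Fin D → ℝ) → ℝ := fun ω => ∑ i, gradient l (δseq (t:ℕ) ω) i *
        Real.sign (gradient l (δseq (t:ℕ) ω) i + γ * ω t i) with hfdef
    have hfmeas : Measurable f := by
      apply Finset.measurable_sum
      intro i _
      apply Measurable.mul
      · exact (by fun_prop : Measurable fun x : EuclideanSpace ℝ (Fin D) => x i).comp hcmeas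
      · exact measurable_realSign.comp (((by fun_prop : Measurable fun x : EuclideanSpace ℝ (Fin D) => x i).comp hcmeas).add
          (measurable_const.mul ((measurable_pi_apply i).comp (measurable_pi_apply t))))
    have hfb : ∀ ω, |f ω| ≤ D * B := by
      intro ω
      calc |f ω| ≤ ∑ i, |gradient l (δseq (t:ℕ) ω) i *
            Real.sign (gradient l (δseq (t:ℕ) ω) i + γ * ω t i)| :=
          Finset.abs_sum_le_sum_abs _ _
        _ ≤ ∑ _i : Fin D, B := by
            apply Finset.sum_le_sum
            intro i _
            rw [abs_mul]
            calc |gradient l (δseq (t:ℕ) ω) i| * |Real.sign _| ≤ B * 1 :=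
                mul_le_mul (hB ω i) (abs_realSign_le _) (abs_nonneg _) hB0
              _ = B := mul_one B
        _ = D * B := by simp [mul_comm]
    have hintf : Integrable f ν := hint f (D*B) hfmeas hfb
    -- pointwise descent
    have hpt : ∀ ω, l (δseq ((t:ℕ)+1) ω)
        ≤ l (δseq (t:ℕ) ω) - ε t * f ω + L * D / 2 * ε t ^ 2 := by
      intro ω
      set u : EuclideanSpace ℝ (Fin D) := (WithLp.equiv 2 (Fin D → ℝ)).symm
          (fun i => Real.sign (gradient l (δseq (t:ℕ) ω) i + γ * ω t i)) with hu
      have hv : δseq ((t:ℕ)+1) ω = δseq (t:ℕ) ω + (-(ε t • u)) := by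
        rw [hrec t ω, sub_eq_add_neg]
      have hd := descent l hl L hL (δseq (t:ℕ) ω) (-(ε t • u))
      rw [← hv] at hd
      have hgu : ⟪gradient l (δseq (t:ℕ) ω), u⟫ = f ω := by
        simp only [hfdef, hu, PiLp.inner_apply, RCLike.inner_apply, conj_trivial,
          WithLp.equiv_symm_apply, PiLp.toLp_apply, mul_comm]
      have hinner : ⟪gradient l (δseq (t:ℕ) ω), -(ε t • u)⟫ = -(ε t * f ω) := by
        rw [inner_neg_right, real_inner_smul_right, hgu]
      have hun : ‖u‖ ≤ Real.sqrt D := sign_vec_norm_le _ (fun i => abs_realSign_le _)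
      have hun2 : ‖u‖ ^ 2 ≤ (D:ℝ) := by
        calc ‖u‖ ^ 2 ≤ Real.sqrt D ^ 2 :=
            pow_le_pow_left₀ (norm_nonneg _) hun 2
          _ = (D:ℝ) := Real.sq_sqrt (by positivity)
      have hnv : ‖-(ε t • u)‖ ^ 2 ≤ ε t ^ 2 * D := by
        rw [norm_neg, norm_smul, Real.norm_eq_abs, mul_pow, sq_abs]
        exact mul_le_mul_of_nonneg_left hun2 (sq_nonneg _)
      have hL2 : L / 2 * ‖-(ε t • u)‖ ^ 2 ≤ L * D / 2 * ε t ^ 2 := by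
        have := mul_le_mul_of_nonneg_left hnv (by linarith : (0:ℝ) ≤ L / 2)
        nlinarith
      rw [hinner] at hd
      linarith
    -- integrate the pointwise inequality
    have hI : (∫ ω, l (δseq ((t:ℕ)+1) ω) ∂ν)
        ≤ ∫ ω, (l (δseq (t:ℕ) ω) - ε t * f ω + L * D / 2 * ε t ^ 2) ∂ν := by
      have h₁ : Integrable (fun ω => l (δseq (t:ℕ) ω) - ε t * f ω) ν :=
        (hlint (t:ℕ) htT).sub (hintf.const_mul (ε t))
      have h₂ : Integrable (fun ω => l (δseq (t:ℕ) ω) - ε t * f ω + L * D / 2 * ε t ^ 2) ν :=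
        h₁.add (integrable_const _)
      exact integral_mono (hlint _ htT1) h₂ hpt
    have hsplit : (∫ ω, (l (δseq (t:ℕ) ω) - ε t * f ω + L * D / 2 * ε t ^ 2) ∂ν)
        = (∫ ω, l (δseq (t:ℕ) ω) ∂ν) - ε t * (∫ ω, f ω ∂ν) + L * D / 2 * ε t ^ 2 := by
      have h₁ : Integrable (fun ω => l (δseq (t:ℕ) ω) - ε t * f ω) ν :=
        (hlint (t:ℕ) htT).sub (hintf.const_mul (ε t))
      rw [integral_add h₁ (integrable_const _),
        integral_sub (hlint (t:ℕ) htT) (hintf.const_mul (ε t)),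
        MeasureTheory.integral_const_mul]
      simp
    have hfeq : (∫ ω, f ω ∂ν) = ∫ ω, (∑ i, |gradient l (δseq (t:ℕ) ω) i| *
        (2 * Phi (|gradient l (δseq (t:ℕ) ω) i| / γ) - 1)) ∂ν := hkey t
    rw [← hfeq]
    rw [hsplit] at hI
    linarith
  -- telescoping
  have htel : ∑ t : Fin T, ((∫ ω, l (δseq (t:ℕ) ω) ∂ν) - (∫ ω, l (δseq ((t:ℕ)+1) ω) ∂ν))
      = (∫ ω, l (δseq 0 ω) ∂ν) - (∫ ω, l (δseq T ω) ∂ν) := by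
    rw [Fin.sum_univ_eq_sum_range (fun s => (∫ ω, l (δseq s ω) ∂ν) - (∫ ω, l (δseq (s+1) ω) ∂ν))]
    exact Finset.sum_range_sub' (fun s => ∫ ω, l (δseq s ω) ∂ν) T
  have h0 : (∫ ω, l (δseq 0 ω) ∂ν) = l δ0 := by
    simp only [hδ0]
    simp
  have hT : sInf (Set.range l) ≤ ∫ ω, l (δseq T ω) ∂ν := by
    have : (∫ _ω, sInf (Set.range l) ∂ν) ≤ ∫ ω, l (δseq T ω) ∂ν := by
      apply integral_mono (integrable_const _) (hlint T le_rfl)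
      intro ω
      exact csInf_le hbdd ⟨_, rfl⟩
    simpa using this
  calc ∑ t : Fin T, ε t * (∫ ω, (∑ i, |gradient l (δseq (t:ℕ) ω) i| *
          (2 * Phi (|gradient l (δseq (t:ℕ) ω) i| / γ) - 1)) ∂ν)
      ≤ ∑ t : Fin T, (((∫ ω, l (δseq (t:ℕ) ω) ∂ν) - (∫ ω, l (δseq ((t:ℕ)+1) ω) ∂ν))
          + L * D / 2 * ε t ^ 2) := Finset.sum_le_sum fun t _ => by linarith [hstep t]
    _ = ((∫ ω, l (δseq 0 ω) ∂ν) - (∫ ω, l (δseq T ω) ∂ν)) + L * D / 2 * ∑ t : Fin T, ε t ^ 2 := by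
        rw [Finset.sum_add_distrib, htel, ← Finset.mul_sum]
    _ ≤ l δ0 - sInf (Set.range l) + L * D / 2 * ∑ t : Fin T, ε t ^ 2 := by
        rw [h0]
        have := hT
        linarith
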